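/- Let H be a reduced, commutative, cancellative, atomic monoid. Then c_mon(H) = sup({μ_eq(a) : a ∈ H, A_a(∼_{H,eq}) ≠ ∅, and |R_{a,k}| > 1 for some k ∈ L(a)} ∪ {μ_adj(a) : a ∈ H, A_a(∼_{H,mon}) ≠ ∅}). -/

import Mathlib

namespace CMR

variable {α : Type*} [CancelCommMonoid α]

/-- The factorization monoid `Z(H)`: the free abelian monoid over the set of atoms of `H`,
modeled as multisets of atoms. -/
abbrev Fac (α : Type*) [CancelCommMonoid α] : Type _ := Multiset {u : α // Irreducible u}

/-- The factorization homomorphism `π : Z(H) → H`. -/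
def piF (z : Fac α) : α := (z.map Subtype.val).prod

/-- `Z a`: the set of factorizations of `a`. -/
def Z (a : α) : Set (Fac α) := {z | piF z = a}

/-- `L a`: the set of lengths of `a`. -/
def L (a : α) : Set ℕ := {n | ∃ z ∈ Z a, Multiset.card z = n}

/-- `Zk a k`: the factorizations of `a` of length `k`. -/
def Zk (a : α) (k : ℕ) : Set (Fac α) := {z ∈ Z a | Multiset.card z = k}

/-- `ZM a M`: the factorizations of `a` whose length lies in `M`. -/
def ZM (a : α) (M : Set ℕ) : Set (Fac α) := {z ∈ Z a | Multiset.card z ∈ M}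

/-- The distance between two factorizations:
`d(z,z') = max (|z / gcd(z,z')|, |z' / gcd(z,z')|)`. -/
noncomputable def d (z z' : Fac α) : ℕ :=
  letI := Classical.decEq {u : α // Irreducible u}
  max (Multiset.card (z - z')) (Multiset.card (z' - z))

/-- The distance between two sets of factorizations, the minimum of pairwise
distances (with the convention `sInf ∅ = 0`). -/
noncomputable def dS (X Y : Set (Fac α)) : ℕ :=
  sInf {n : ℕ | ∃ x ∈ X, ∃ y ∈ Y, d x y = n}

/-- `k` and `l` are adjacent lengths of `a` (with `k < l`):
`L(a) ∩ [k, l] = {k, l}`. -/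
def Adjacent (a : α) (k l : ℕ) : Prop :=
  k ∈ L a ∧ l ∈ L a ∧ k < l ∧ ∀ m ∈ L a, k ≤ m → m ≤ l → m = k ∨ m = l

/-- A chain of factorizations of `a` from `z` to `z'` whose consecutive members
satisfy the step predicate `P`. -/
def Chain (a : α) (P : Fac α → Fac α → Prop) (z z' : Fac α) : Prop :=
  ∃ (n : ℕ) (c : Fin (n + 1) → Fac α),
    c 0 = z ∧ c (Fin.last n) = z' ∧ (∀ i, c i ∈ Z a) ∧
    ∀ i : Fin n, P (c i.castSucc) (c i.succ)

/-- The catenary degree of an element: the smallest `N ∈ ℕ∞` such that any two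
factorizations of `a` are connected by an `N`-chain. -/
noncomputable def cat (a : α) : ℕ∞ :=
  sInf {N : ℕ∞ | ∀ z ∈ Z a, ∀ z' ∈ Z a,
    Chain a (fun x y => (d x y : ℕ∞) ≤ N) z z'}

/-- The equal catenary degree of an element: the smallest `N ∈ ℕ∞` such that any two
factorizations of `a` of the same length are connected by an equal-length `N`-chain. -/
noncomputable def ceq (a : α) : ℕ∞ :=
  sInf {N : ℕ∞ | ∀ z ∈ Z a, ∀ z' ∈ Z a, Multiset.card z = Multiset.card z' →
    Chain a (fun x y => (d x y : ℕ∞) ≤ N ∧ Multiset.card x = Multiset.card y) z z'}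

/-- The monotone catenary degree of an element: the smallest `N ∈ ℕ∞` such that any two
factorizations of `a` (ordered by length) are connected by a monotone `N`-chain. -/
noncomputable def cmon (a : α) : ℕ∞ :=
  sInf {N : ℕ∞ | ∀ z ∈ Z a, ∀ z' ∈ Z a, Multiset.card z ≤ Multiset.card z' →
    Chain a (fun x y => (d x y : ℕ∞) ≤ N ∧ Multiset.card x ≤ Multiset.card y) z z'}

/-- The adjacent catenary degree of an element:
`c_adj(a) = sup{d(Z_k(a), Z_l(a)) : k, l ∈ L(a) adjacent}`. -/
noncomputable def cadj (a : α) : ℕ∞ :=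
  sSup {r : ℕ∞ | ∃ k l : ℕ, Adjacent a k l ∧ r = (dS (Zk a k) (Zk a l) : ℕ∞)}

noncomputable def catH (α : Type*) [CancelCommMonoid α] : ℕ∞ := ⨆ a : α, cat a
noncomputable def ceqH (α : Type*) [CancelCommMonoid α] : ℕ∞ := ⨆ a : α, ceq a
noncomputable def cmonH (α : Type*) [CancelCommMonoid α] : ℕ∞ := ⨆ a : α, cmon a
noncomputable def cadjH (α : Type*) [CancelCommMonoid α] : ℕ∞ := ⨆ a : α, cadj a

/-- `gcd(x, y) ≠ 1`: the two factorizations share an atom. -/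
def RStep (x y : Fac α) : Prop := ∃ u, u ∈ x ∧ u ∈ y

/-- `z ≈ z'`: there is an `R`-chain concatenating `z` and `z'` in `Z a`. -/
def RRel (a : α) (z z' : Fac α) : Prop := Chain a RStep z z'

/-- `z ≈_eq z'`: there is an equal-length `R`-chain concatenating `z` and `z'` in `Z a`. -/
def RRelEq (a : α) (z z' : Fac α) : Prop :=
  Chain a (fun x y => RStep x y ∧ Multiset.card x = Multiset.card y) z z'

/-- There is a monotone `R`-chain from `z` to `z'` in `Z a`. -/
def MonRChain (a : α) (z z' : Fac α) : Prop :=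
  Chain a (fun x y => RStep x y ∧ Multiset.card x ≤ Multiset.card y) z z'

/-- `μ(a)`: the supremum, over the `R`-classes `ρ` of `Z a`, of the minimal length of
an element of `ρ`. -/
noncomputable def mu (a : α) : ℕ∞ :=
  sSup {r : ℕ∞ | ∃ z ∈ Z a,
    r = ((sInf {n : ℕ | ∃ z', RRel a z z' ∧ Multiset.card z' = n} : ℕ) : ℕ∞)}

noncomputable def muH (α : Type*) [CancelCommMonoid α] : ℕ∞ := ⨆ a : α, mu a

/-- `μ_eq(a) = sup{k ∈ L(a) : Z_k(a) has more than one ≈_eq-class}`. -/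
noncomputable def mueq (a : α) : ℕ∞ :=
  sSup {r : ℕ∞ | ∃ k ∈ L a,
    (∃ z ∈ Zk a k, ∃ z' ∈ Zk a k, ¬ RRelEq a z z') ∧ r = (k : ℕ∞)}

noncomputable def mueqH (α : Type*) [CancelCommMonoid α] : ℕ∞ := ⨆ a : α, mueq a

/-- `μ_adj(a) = sup{k ∈ L(a) : d(Z_k(a), Z_l(a)) = k for the l ∈ L(a), l < k adjacent to k}`. -/
noncomputable def muadj (a : α) : ℕ∞ :=
  sSup {r : ℕ∞ | ∃ k ∈ L a,
    (∃ l : ℕ, Adjacent a l k ∧ dS (Zk a k) (Zk a l) = k) ∧ r = (k : ℕ∞)}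

noncomputable def muadjH (α : Type*) [CancelCommMonoid α] : ℕ∞ := ⨆ a : α, muadj a

/-- The monoid of relations of `H`, as a subset of `Z(H) × Z(H)`. -/
def relMon (α : Type*) [CancelCommMonoid α] : Set (Fac α × Fac α) :=
  {p | piF p.1 = piF p.2}

/-- The monoid of equal-length relations of `H`. -/
def relMonEq (α : Type*) [CancelCommMonoid α] : Set (Fac α × Fac α) :=
  {p | piF p.1 = piF p.2 ∧ Multiset.card p.1 = Multiset.card p.2}

/-- The monoid of monotone relations of `H`. -/
def relMonMon (α : Type*) [CancelCommMonoid α] : Set (Fac α × Fac α) :=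
  {p | piF p.1 = piF p.2 ∧ Multiset.card p.1 ≤ Multiset.card p.2}

/-- `p` is an atom (irreducible element) of the reduced submonoid `S` of `Z(H) × Z(H)`. -/
def IsAtomIn (S : Set (Fac α × Fac α)) (p : Fac α × Fac α) : Prop :=
  p ∈ S ∧ p ≠ 0 ∧ ∀ q ∈ S, ∀ r ∈ S, p = q + r → q = 0 ∨ r = 0

/-- `A_a(S) = A(S) ∩ (Z(a) × Z(a))`. -/
def AtomsAt (S : Set (Fac α × Fac α)) (a : α) : Set (Fac α × Fac α) :=
  {p | IsAtomIn S p ∧ p.1 ∈ Z a ∧ p.2 ∈ Z a}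

/-- The tame degree `t(a, x)`. -/
noncomputable def tdeg (a : α) (x : Fac α) : ℕ∞ :=
  sInf {N : ℕ∞ | ∀ z ∈ Z a, (∃ w ∈ Z a, x ≤ w) →
    ∃ z' ∈ Z a, x ≤ z' ∧ (d z z' : ℕ∞) ≤ N}

/-- The tame degree `t(H) = sup{t(a, u) : a ∈ H, u ∈ A(H)}`. -/
noncomputable def tH (α : Type*) [CancelCommMonoid α] : ℕ∞ :=
  ⨆ (a : α) (u : {u : α // Irreducible u}), tdeg a {u}

/-- The `m`-adjacent catenary degree of an element:
`c_{ad,m}(a) = sup{d(Z_k(a), Z_{[k-m,k)}(a)) : k ∈ L(a)}`. -/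
noncomputable def cadm (m : ℕ) (a : α) : ℕ∞ :=
  sSup {r : ℕ∞ | ∃ k ∈ L a, r = (dS (Zk a k) (ZM a (Set.Ico (k - m) k)) : ℕ∞)}

noncomputable def cadmH (α : Type*) [CancelCommMonoid α] (m : ℕ) : ℕ∞ := ⨆ a : α, cadm m a

/-- `μ_{ad,m}(a) = sup{k ∈ L(a) : d(Z_k(a), Z_{[k-m,k)}(a)) = k}`. -/
noncomputable def muadm (m : ℕ) (a : α) : ℕ∞ :=
  sSup {r : ℕ∞ | ∃ k ∈ L a, dS (Zk a k) (ZM a (Set.Ico (k - m) k)) = k ∧ r = (k : ℕ∞)}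

noncomputable def muadmH (α : Type*) [CancelCommMonoid α] (m : ℕ) : ℕ∞ := ⨆ a : α, muadm m a

/-- `H` is reduced: the only unit is `1`. -/
def Reduced (α : Type*) [CancelCommMonoid α] : Prop := ∀ a : α, IsUnit a → a = 1

/-- `H` is atomic: every element is a product of atoms. -/
def Atomic (α : Type*) [CancelCommMonoid α] : Prop := ∀ a : α, ∃ z : Fac α, piF z = a

/-- The ascending chain condition on principal ideals. -/
def ACCP (α : Type*) [CancelCommMonoid α] : Prop :=
  ∀ f : ℕ → α, (∀ n, f (n + 1) ∣ f n) → ∃ N, ∀ n, N ≤ n → f N ∣ f n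

/-! ### Auxiliary lemmas -/

open Relation

theorem piF_cons (u : {u : α // Irreducible u}) (w : Fac α) :
    piF (u ::ₘ w) = u.val * piF w := by simp [piF]

theorem piF_add (x y : Fac α) : piF (x + y) = piF x * piF y := by simp [piF]

theorem piF_eq_one {z : Fac α} (h : piF z = 1) : z = 0 := by
  by_contra hz
  obtain ⟨u, hu⟩ := Multiset.exists_mem_of_ne_zero hz
  obtain ⟨w, rfl⟩ := Multiset.exists_cons_of_mem hu
  rw [piF_cons] at h
  exact u.2.not_isUnit (IsUnit.of_mul_eq_one _ h)

theorem msub_cons_cons {β : Type*} [DecidableEq β] (u : β) (x y : Multiset β) :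
    (u ::ₘ x) - (u ::ₘ y) = x - y := by
  rw [Multiset.sub_cons, Multiset.erase_cons_head]

theorem msub_eq_self {β : Type*} [DecidableEq β] {x y : Multiset β}
    (h : ∀ u ∈ x, u ∉ y) : x - y = x := by
  refine Multiset.ext.2 fun u => ?_
  rw [Multiset.count_sub]
  by_cases hu : u ∈ x
  · rw [Multiset.count_eq_zero.2 (h u hu), Nat.sub_zero]
  · simp [Multiset.count_eq_zero.2 hu]

theorem d_comm (x y : Fac α) : d x y = d y x := by
  unfold d; exact max_comm _ _

theorem d_cons (u : {u : α // Irreducible u}) (x y : Fac α) :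
    d (u ::ₘ x) (u ::ₘ y) = d x y := by
  unfold d
  rw [@msub_cons_cons _ (Classical.decEq _) u x y, @msub_cons_cons _ (Classical.decEq _) u y x]

theorem mcard_sub_le {β : Type*} [DecidableEq β] (x y : Multiset β) :
    Multiset.card (x - y) ≤ Multiset.card x :=
  Multiset.card_le_card tsub_le_self

theorem d_le_max (x y : Fac α) :
    d x y ≤ max (Multiset.card x) (Multiset.card y) := by
  unfold d
  exact max_le (le_max_of_le_left (@mcard_sub_le _ (Classical.decEq _) x y))
    (le_max_of_le_right (@mcard_sub_le _ (Classical.decEq _) y x))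

theorem d_eq_of_disj {x y : Fac α} (h : ∀ u ∈ x, u ∉ y) :
    d x y = max (Multiset.card x) (Multiset.card y) := by
  have h' : ∀ u ∈ y, u ∉ x := fun u hy hx => h u hx hy
  unfold d
  rw [@msub_eq_self _ (Classical.decEq _) _ _ h, @msub_eq_self _ (Classical.decEq _) _ _ h']

theorem exists_common_of_d_lt {x y : Fac α} (h : d x y < Multiset.card x) :
    ∃ u, u ∈ x ∧ u ∈ y := by
  by_contra hc
  push_neg at hc
  rw [d_eq_of_disj hc] at h
  exact absurd (le_max_left _ _) (not_le.2 h)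

/-! ### Chain machinery -/

theorem chain_refl {a : α} {P : Fac α → Fac α → Prop} {z : Fac α} (hz : z ∈ Z a) :
    Chain a P z z :=
  ⟨0, fun _ => z, rfl, rfl, fun _ => hz, fun i => i.elim0⟩

theorem chain_mem_left {a : α} {P : Fac α → Fac α → Prop} {z z' : Fac α}
    (h : Chain a P z z') : z ∈ Z a := by
  obtain ⟨n, c, h0, hl, hZ, _⟩ := h
  exact h0 ▸ hZ 0

theorem chain_snoc {a : α} {P : Fac α → Fac α → Prop} {z y z' : Fac α}
    (h : Chain a P z y) (hstep : P y z') (hz' : z' ∈ Z a) : Chain a P z z' := by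
  obtain ⟨n, c, h0, hl, hZ, hs⟩ := h
  refine ⟨n + 1, Fin.snoc c z', ?_, ?_, ?_, ?_⟩
  · rw [show (0 : Fin (n + 2)) = Fin.castSucc 0 from rfl, Fin.snoc_castSucc]
    exact h0
  · rw [Fin.snoc_last]
  · intro i
    refine Fin.lastCases ?_ (fun j => ?_) i
    · rw [Fin.snoc_last]; exact hz'
    · rw [Fin.snoc_castSucc]; exact hZ j
  · intro i
    refine Fin.lastCases ?_ (fun j => ?_) i
    · rw [Fin.succ_last, Fin.snoc_last, Fin.snoc_castSucc, hl]
      exact hstep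
    · rw [Fin.succ_castSucc, Fin.snoc_castSucc, Fin.snoc_castSucc]
      exact hs j

theorem rtg_of_chain {a : α} {P : Fac α → Fac α → Prop} {z z' : Fac α}
    (h : Chain a P z z') :
    ReflTransGen (fun x y => P x y ∧ x ∈ Z a ∧ y ∈ Z a) z z' := by
  obtain ⟨n, c, h0, hl, hZ, hs⟩ := h
  subst h0; subst hl
  have key : ∀ j : Fin (n + 1),
      ReflTransGen (fun x y => P x y ∧ x ∈ Z a ∧ y ∈ Z a) (c 0) (c j) := by
    intro j
    induction j using Fin.induction with
    | zero => exact .refl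
    | succ i ih => exact ih.tail ⟨hs i, hZ _, hZ _⟩
  exact key (Fin.last n)

theorem chain_of_rtg {a : α} {P : Fac α → Fac α → Prop} {z z' : Fac α} (hz : z ∈ Z a)
    (h : ReflTransGen (fun x y => P x y ∧ x ∈ Z a ∧ y ∈ Z a) z z') :
    Chain a P z z' := by
  induction h with
  | refl => exact chain_refl hz
  | tail h₁ h₂ ih => exact chain_snoc ih h₂.1 h₂.2.2

theorem chain_trans {a : α} {P : Fac α → Fac α → Prop} {x y z : Fac α}
    (h1 : Chain a P x y) (h2 : Chain a P y z) : Chain a P x z :=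
  chain_of_rtg (chain_mem_left h1) ((rtg_of_chain h1).trans (rtg_of_chain h2))

theorem chain_mono {a : α} {P Q : Fac α → Fac α → Prop}
    (hPQ : ∀ x y, P x y → Q x y) {z z' : Fac α} (h : Chain a P z z') :
    Chain a Q z z' :=
  chain_of_rtg (chain_mem_left h)
    (ReflTransGen.mono (fun x y hxy => ⟨hPQ _ _ hxy.1, hxy.2⟩) _ _ (rtg_of_chain h))

theorem chain_cons {a b : α} {P Q : Fac α → Fac α → Prop} {u : {u : α // Irreducible u}}
    (hab : u.val * b = a) (hPQ : ∀ x y, P x y → Q (u ::ₘ x) (u ::ₘ y))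
    {z z' : Fac α} (h : Chain b P z z') : Chain a Q (u ::ₘ z) (u ::ₘ z') := by
  have hmem : ∀ {w : Fac α}, w ∈ Z b → (u ::ₘ w) ∈ Z a := by
    intro w hw
    show piF (u ::ₘ w) = a
    rw [piF_cons, show piF w = b from hw, hab]
  exact chain_of_rtg (hmem (chain_mem_left h))
    (ReflTransGen.lift (fun w => u ::ₘ w)
      (fun x y hxy => ⟨hPQ _ _ hxy.1, hmem hxy.2.1, hmem hxy.2.2⟩) _ _ (rtg_of_chain h))

theorem rtg_card_mono {R : Fac α → Fac α → Prop}
    (hR : ∀ x y, R x y → Multiset.card x ≤ Multiset.card y) :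
    ∀ {p q : Fac α}, ReflTransGen R p q → Multiset.card p ≤ Multiset.card q := by
  intro p q h
  induction h with
  | refl => exact le_rfl
  | tail h₁ h₂ ih => exact ih.trans (hR _ _ h₂)

theorem rtg_card_eq {R : Fac α → Fac α → Prop}
    (hR : ∀ x y, R x y → Multiset.card x = Multiset.card y) :
    ∀ {p q : Fac α}, ReflTransGen R p q → Multiset.card p = Multiset.card q := by
  intro p q h
  induction h with
  | refl => rfl
  | tail h₁ h₂ ih => exact ih.trans (hR _ _ h₂)

theorem rtg_sandwich {R : Fac α → Fac α → Prop}
    (hR : ∀ x y, R x y → Multiset.card x ≤ Multiset.card y) :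
    ∀ {p q : Fac α}, ReflTransGen R p q → Multiset.card q ≤ Multiset.card p →
      ReflTransGen (fun x y => R x y ∧ Multiset.card x = Multiset.card p ∧
        Multiset.card y = Multiset.card p) p q := by
  intro p q h
  induction h with
  | refl => intro _; exact .refl
  | @tail b c h₁ h₂ ih =>
    intro hle
    have hb1 : Multiset.card p ≤ Multiset.card b := rtg_card_mono hR h₁
    have hb2 : Multiset.card b ≤ Multiset.card c := hR _ _ h₂
    exact (ih (by omega)).tail ⟨h₂, by omega, by omega⟩

/-! ### Atom dichotomies -/

theorem eq_dichotomy {a : α} {x y : Fac α} (hx : x ∈ Z a) (hy : y ∈ Z a)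
    (hcard : Multiset.card x = Multiset.card y) (hne : ¬ RRelEq a x y) :
    IsAtomIn (relMonEq α) (x, y) := by
  have hxa : piF x = a := hx
  have hya : piF y = a := hy
  refine ⟨⟨hxa.trans hya.symm, hcard⟩, ?_, ?_⟩
  · intro h0
    obtain ⟨h1, h2⟩ := Prod.ext_iff.mp h0
    have hxy : x = y := h1.trans h2.symm
    exact hne (hxy ▸ chain_refl hx)
  · intro q hq r hr heq
    by_contra hno
    push_neg at hno
    obtain ⟨hq0, hr0⟩ := hno
    obtain ⟨hqp, hqc⟩ := hq
    obtain ⟨hrp, hrc⟩ := hr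
    have hx1 : x = q.1 + r.1 := congrArg Prod.fst heq
    have hy1 : y = q.2 + r.2 := congrArg Prod.snd heq
    have hq2 : q.2 ≠ 0 := by
      intro h
      apply hq0
      have : Multiset.card q.1 = 0 := by rw [hqc, h]; rfl
      exact Prod.ext (Multiset.card_eq_zero.1 this) h
    have hr1 : r.1 ≠ 0 := by
      intro h
      apply hr0
      have : Multiset.card r.2 = 0 := by rw [← hrc, h]; rfl
      exact Prod.ext h (Multiset.card_eq_zero.1 this)
    obtain ⟨u, hu⟩ := Multiset.exists_mem_of_ne_zero hr1
    obtain ⟨v, hv⟩ := Multiset.exists_mem_of_ne_zero hq2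
    have hmidZ : (q.2 + r.1) ∈ Z a := by
      show piF (q.2 + r.1) = a
      rw [piF_add, ← hqp, ← piF_add, ← hx1, hxa]
    have step1 : (RStep x (q.2 + r.1) ∧
        Multiset.card x = Multiset.card (q.2 + r.1)) ∧ x ∈ Z a ∧ (q.2 + r.1) ∈ Z a := by
      refine ⟨⟨⟨u, ?_, Multiset.mem_add.2 (Or.inr hu)⟩, ?_⟩, hx, hmidZ⟩
      · rw [hx1]; exact Multiset.mem_add.2 (Or.inr hu)
      · rw [hx1]; simp [hqc]
    have step2 : (RStep (q.2 + r.1) y ∧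
        Multiset.card (q.2 + r.1) = Multiset.card y) ∧ (q.2 + r.1) ∈ Z a ∧ y ∈ Z a := by
      refine ⟨⟨⟨v, Multiset.mem_add.2 (Or.inl hv), ?_⟩, ?_⟩, hmidZ, hy⟩
      · rw [hy1]; exact Multiset.mem_add.2 (Or.inl hv)
      · rw [hy1]; simp [hrc]
    exact hne (chain_of_rtg hx (ReflTransGen.tail
      (ReflTransGen.single
        (r := fun p q => (RStep p q ∧ Multiset.card p = Multiset.card q) ∧ p ∈ Z a ∧ q ∈ Z a)
        step1) step2))

theorem mon_atom {a : α} {l k : ℕ} (hadj : Adjacent a l k)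
    (hdisj : ∀ x ∈ Zk a l, ∀ y ∈ Zk a k, ∀ u, u ∈ x → u ∉ y)
    {x y : Fac α} (hx : x ∈ Zk a l) (hy : y ∈ Zk a k) :
    IsAtomIn (relMonMon α) (x, y) := by
  obtain ⟨hxZ, hxc⟩ := hx
  obtain ⟨hyZ, hyc⟩ := hy
  have hxa : piF x = a := hxZ
  have hya : piF y = a := hyZ
  have hlk : l < k := hadj.2.2.1
  refine ⟨⟨hxa.trans hya.symm, by rw [hxc, hyc]; exact le_of_lt hlk⟩, ?_, ?_⟩
  · intro h0
    have h2 : y = 0 := congrArg Prod.snd h0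
    rw [h2] at hyc
    simp at hyc
    omega
  · intro q hq r hr heq
    by_contra hno
    push_neg at hno
    obtain ⟨hq0, hr0⟩ := hno
    obtain ⟨hqp, hqc⟩ := hq
    obtain ⟨hrp, hrc⟩ := hr
    have hx1 : x = q.1 + r.1 := congrArg Prod.fst heq
    have hy1 : y = q.2 + r.2 := congrArg Prod.snd heq
    have hq2 : q.2 ≠ 0 := by
      intro h
      apply hq0
      have h1 : q.1 = 0 := by
        rw [h] at hqc
        exact Multiset.card_eq_zero.1 (Nat.le_zero.1 hqc)
      exact Prod.ext h1 h
    have hq1 : q.1 ≠ 0 := by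
      intro h
      apply hq2
      apply piF_eq_one
      rw [← hqp, h]; rfl
    have hr2 : r.2 ≠ 0 := by
      intro h
      apply hr0
      have h1 : r.1 = 0 := by
        rw [h] at hrc
        exact Multiset.card_eq_zero.1 (Nat.le_zero.1 hrc)
      exact Prod.ext h1 h
    have hr1 : r.1 ≠ 0 := by
      intro h
      apply hr2
      apply piF_eq_one
      rw [← hrp, h]; rfl
    have hmidZ : (q.2 + r.1) ∈ Z a := by
      show piF (q.2 + r.1) = a
      rw [piF_add, ← hqp, ← piF_add, ← hx1, hxa]
    have hcard1 : l ≤ Multiset.card (q.2 + r.1) := by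
      rw [← hxc, hx1]
      simp only [Multiset.card_add]
      omega
    have hcard2 : Multiset.card (q.2 + r.1) ≤ k := by
      rw [← hyc, hy1]
      simp only [Multiset.card_add]
      omega
    have hmidL : Multiset.card (q.2 + r.1) ∈ L a := ⟨q.2 + r.1, hmidZ, rfl⟩
    obtain ⟨u, hu⟩ := Multiset.exists_mem_of_ne_zero hr1
    obtain ⟨v, hv⟩ := Multiset.exists_mem_of_ne_zero hq2
    rcases hadj.2.2.2 _ hmidL hcard1 hcard2 with hmid | hmid
    · exact hdisj (q.2 + r.1) ⟨hmidZ, hmid⟩ y ⟨hyZ, hyc⟩ v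
        (Multiset.mem_add.2 (Or.inl hv)) (by rw [hy1]; exact Multiset.mem_add.2 (Or.inl hv))
    · exact hdisj x ⟨hxZ, hxc⟩ (q.2 + r.1) ⟨hmidZ, hmid⟩ u
        (by rw [hx1]; exact Multiset.mem_add.2 (Or.inr hu)) (Multiset.mem_add.2 (Or.inr hu))

/-! ### Main chain constructions -/

theorem adj_step (S : ℕ∞)
    (hS2 : ∀ a : α, (AtomsAt (relMonMon α) a).Nonempty → muadj a ≤ S) :
    ∀ (k : ℕ) (a : α) (l : ℕ), Adjacent a l k →
      ∃ x ∈ Zk a l, ∃ y ∈ Zk a k, (d x y : ℕ∞) ≤ S := by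
  intro k
  induction k using Nat.strong_induction_on with
  | _ k ih =>
  intro a l hadj
  by_cases hc : ∃ x ∈ Zk a l, ∃ y ∈ Zk a k, ∃ u, u ∈ x ∧ u ∈ y
  · obtain ⟨x, hx, y, hy, u, hux, huy⟩ := hc
    obtain ⟨x1, rfl⟩ := Multiset.exists_cons_of_mem hux
    obtain ⟨y1, rfl⟩ := Multiset.exists_cons_of_mem huy
    obtain ⟨hxZ, hxc⟩ := hx
    obtain ⟨hyZ, hyc⟩ := hy
    have hxa : piF (u ::ₘ x1) = a := hxZ
    have hya : piF (u ::ₘ y1) = a := hyZ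
    have hy1b : piF y1 = piF x1 := by
      apply mul_left_cancel (a := u.val)
      rw [← piF_cons, ← piF_cons, hxa, hya]
    have hax : u.val * piF x1 = a := by rw [← piF_cons, hxa]
    rw [Multiset.card_cons] at hxc hyc
    have hadj' : Adjacent (piF x1) (Multiset.card x1) (Multiset.card y1) := by
      refine ⟨⟨x1, rfl, rfl⟩, ⟨y1, hy1b, rfl⟩, ?_, ?_⟩
      · have := hadj.2.2.1
        omega
      · intro m hm h1 h2
        obtain ⟨w, hwZ, hwc⟩ := hm
        have hwa : (u ::ₘ w) ∈ Z a := by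
          show piF (u ::ₘ w) = a
          rw [piF_cons, show piF w = piF x1 from hwZ, hax]
        have hmL : m + 1 ∈ L a := ⟨u ::ₘ w, hwa, by rw [Multiset.card_cons, hwc]⟩
        have := hadj.2.2.1
        rcases hadj.2.2.2 _ hmL (by omega) (by omega) with h | h
        · left; omega
        · right; omega
    obtain ⟨x2, hx2, y2, hy2, hd2⟩ :=
      ih (Multiset.card y1) (by omega) (piF x1) (Multiset.card x1) hadj'
    refine ⟨u ::ₘ x2, ⟨?_, ?_⟩, u ::ₘ y2, ⟨?_, ?_⟩, ?_⟩
    · show piF (u ::ₘ x2) = a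
      rw [piF_cons, show piF x2 = piF x1 from hx2.1, hax]
    · rw [Multiset.card_cons, hx2.2]; omega
    · show piF (u ::ₘ y2) = a
      rw [piF_cons, show piF y2 = piF x1 from hy2.1, hax]
    · rw [Multiset.card_cons, hy2.2]; omega
    · rw [d_cons]; exact hd2
  · push_neg at hc
    obtain ⟨hlL, hkL, hlk, hbet⟩ := hadj
    obtain ⟨x, hxZ, hxc⟩ := hlL
    obtain ⟨y, hyZ, hyc⟩ := hkL
    have hx : x ∈ Zk a l := ⟨hxZ, hxc⟩
    have hy : y ∈ Zk a k := ⟨hyZ, hyc⟩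
    have hatom := mon_atom ⟨⟨x, hxZ, hxc⟩, ⟨y, hyZ, hyc⟩, hlk, hbet⟩ hc hx hy
    have hAt : (AtomsAt (relMonMon α) a).Nonempty := ⟨(x, y), hatom, hxZ, hyZ⟩
    have hdval : ∀ p ∈ Zk a k, ∀ q ∈ Zk a l, d p q = k := by
      intro p hp q hq
      rw [d_comm, d_eq_of_disj (hc q hq p hp), hp.2, hq.2]
      exact max_eq_right (le_of_lt hlk)
    have hdS : dS (Zk a k) (Zk a l) = k := by
      have hmem : k ∈ {n : ℕ | ∃ p ∈ Zk a k, ∃ q ∈ Zk a l, d p q = n} :=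
        ⟨y, hy, x, hx, hdval y hy x hx⟩
      refine le_antisymm (Nat.sInf_le hmem) (le_csInf ⟨k, hmem⟩ ?_)
      rintro n ⟨p, hp, q, hq, rfl⟩
      exact (hdval p hp q hq).ge
    have hkmu : (k : ℕ∞) ≤ muadj a :=
      le_sSup ⟨k, ⟨y, hyZ, hyc⟩, ⟨l, ⟨⟨x, hxZ, hxc⟩, ⟨y, hyZ, hyc⟩, hlk, hbet⟩, hdS⟩, rfl⟩
    refine ⟨x, hx, y, hy, ?_⟩
    rw [show d x y = k from (d_comm x y).trans (hdval y hy x hx)]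
    exact hkmu.trans (hS2 a hAt)

theorem eq_chain (S : ℕ∞)
    (hS1 : ∀ a : α, (AtomsAt (relMonEq α) a).Nonempty →
      (∃ k ∈ L a, ∃ z ∈ Zk a k, ∃ z' ∈ Zk a k, ¬ RRelEq a z z') → mueq a ≤ S) :
    ∀ (k : ℕ) (a : α) (x : Fac α), x ∈ Zk a k → ∀ y ∈ Zk a k,
      Chain a (fun p q => (d p q : ℕ∞) ≤ S ∧ Multiset.card p = Multiset.card q) x y := by
  intro k
  induction k using Nat.strong_induction_on with
  | _ k ih =>
  intro a x hx y hy
  by_cases hr : RRelEq a x y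
  · have hrtg := rtg_of_chain hr
    clear hr hy
    induction hrtg with
    | refl => exact chain_refl hx.1
    | @tail b c h₁ h₂ ihh =>
      have hcb : Multiset.card x = Multiset.card b :=
        rtg_card_eq (fun p q h => h.1.2) h₁
      obtain ⟨⟨⟨u, hub, huc⟩, hbc⟩, hbZ, hcZ⟩ := h₂
      obtain ⟨b1, rfl⟩ := Multiset.exists_cons_of_mem hub
      obtain ⟨c1, rfl⟩ := Multiset.exists_cons_of_mem huc
      have hba : piF (u ::ₘ b1) = a := hbZ
      have hca : piF (u ::ₘ c1) = a := hcZ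
      have hc1b : piF c1 = piF b1 := by
        apply mul_left_cancel (a := u.val)
        rw [← piF_cons, ← piF_cons, hba, hca]
      have hcards : Multiset.card c1 = Multiset.card b1 := by
        rw [Multiset.card_cons, Multiset.card_cons] at hbc
        omega
      have hlt : Multiset.card b1 < k := by
        have hk2 : Multiset.card (u ::ₘ b1) = k := by rw [← hcb]; exact hx.2
        rw [Multiset.card_cons] at hk2
        omega
      have hsub := ih (Multiset.card b1) hlt (piF b1) b1 ⟨rfl, rfl⟩ c1 ⟨hc1b, hcards⟩
      have hstep : Chain a (fun p q => (d p q : ℕ∞) ≤ S ∧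
          Multiset.card p = Multiset.card q) (u ::ₘ b1) (u ::ₘ c1) := by
        refine chain_cons (by rw [← piF_cons, hba]) ?_ hsub
        intro p q hpq
        refine ⟨?_, by simp [Multiset.card_cons, hpq.2]⟩
        rw [d_cons]
        exact hpq.1
      exact chain_trans ihh hstep
  · have hkL : k ∈ L a := ⟨x, hx.1, hx.2⟩
    have hatom := eq_dichotomy hx.1 hy.1 (hx.2.trans hy.2.symm) hr
    have hAt : (AtomsAt (relMonEq α) a).Nonempty := ⟨(x, y), hatom, hx.1, hy.1⟩
    have hwit : ∃ k ∈ L a, ∃ z ∈ Zk a k, ∃ z' ∈ Zk a k, ¬ RRelEq a z z' :=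
      ⟨k, hkL, x, hx, y, hy, hr⟩
    have hkmu : (k : ℕ∞) ≤ mueq a := le_sSup ⟨k, hkL, ⟨x, hx, y, hy, hr⟩, rfl⟩
    have hdk : d x y ≤ k := by
      have := d_le_max x y
      rw [hx.2, hy.2, max_self] at this
      exact this
    have hdS : (d x y : ℕ∞) ≤ S :=
      le_trans (Nat.cast_le.mpr hdk) (hkmu.trans (hS1 a hAt hwit))
    exact chain_of_rtg hx.1
      (ReflTransGen.single ⟨⟨hdS, hx.2.trans hy.2.symm⟩, hx.1, hy.1⟩)

theorem eq_chain' (S : ℕ∞)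
    (hS1 : ∀ a : α, (AtomsAt (relMonEq α) a).Nonempty →
      (∃ k ∈ L a, ∃ z ∈ Zk a k, ∃ z' ∈ Zk a k, ¬ RRelEq a z z') → mueq a ≤ S)
    {a : α} {z z' : Fac α} (hz : z ∈ Z a) (hz' : z' ∈ Z a)
    (h : Multiset.card z = Multiset.card z') :
    Chain a (fun x y => (d x y : ℕ∞) ≤ S ∧ Multiset.card x ≤ Multiset.card y) z z' :=
  chain_mono (fun _ _ h => ⟨h.1, le_of_eq h.2⟩)
    (eq_chain S hS1 (Multiset.card z) a z ⟨hz, rfl⟩ z' ⟨hz', h.symm⟩)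

theorem mon_chain (S : ℕ∞)
    (hS1 : ∀ a : α, (AtomsAt (relMonEq α) a).Nonempty →
      (∃ k ∈ L a, ∃ z ∈ Zk a k, ∃ z' ∈ Zk a k, ¬ RRelEq a z z') → mueq a ≤ S)
    (hS2 : ∀ a : α, (AtomsAt (relMonMon α) a).Nonempty → muadj a ≤ S) :
    ∀ (g : ℕ) (a : α) (z : Fac α), z ∈ Z a → ∀ z' ∈ Z a,
      Multiset.card z ≤ Multiset.card z' →
      Multiset.card z' - Multiset.card z ≤ g →
      Chain a (fun x y => (d x y : ℕ∞) ≤ S ∧ Multiset.card x ≤ Multiset.card y) z z' := by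
  intro g
  induction g with
  | zero =>
    intro a z hz z' hz' hle hgap
    exact eq_chain' S hS1 hz hz' (by omega)
  | succ g ihg =>
    intro a z hz z' hz' hle hgap
    rcases eq_or_lt_of_le hle with heq | hlt
    · exact eq_chain' S hS1 hz hz' heq
    · set T : Set ℕ := {m | m ∈ L a ∧ Multiset.card z < m ∧ m ≤ Multiset.card z'} with hT
      have hTne : T.Nonempty := ⟨Multiset.card z', ⟨z', hz', rfl⟩, hlt, le_rfl⟩
      obtain ⟨hl'L, hl'gt, hl'le⟩ := Nat.sInf_mem hTne
      have hadj : Adjacent a (Multiset.card z) (sInf T) := by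
        refine ⟨⟨z, hz, rfl⟩, hl'L, hl'gt, ?_⟩
        intro m hm h1 h2
        rcases eq_or_lt_of_le h1 with h | h
        · exact Or.inl h.symm
        · exact Or.inr (le_antisymm h2 (Nat.sInf_le ⟨hm, h, h2.trans hl'le⟩))
      obtain ⟨x, hxk, y, hyk, hd⟩ := adj_step S hS2 (sInf T) a (Multiset.card z) hadj
      have chain1 := eq_chain' S hS1 hz hxk.1 hxk.2.symm
      have chainstep : Chain a (fun p q => (d p q : ℕ∞) ≤ S ∧
          Multiset.card p ≤ Multiset.card q) x y :=
        chain_of_rtg hxk.1 (ReflTransGen.single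
          ⟨⟨hd, by rw [hxk.2, hyk.2]; exact le_of_lt hl'gt⟩, hxk.1, hyk.1⟩)
      have chain2 := ihg a y hyk.1 z' hz' (by rw [hyk.2]; exact hl'le) (by rw [hyk.2]; omega)
      exact chain_trans (chain_trans chain1 chainstep) chain2

/-- Let `H` be a reduced, commutative, cancellative, atomic monoid. Then
`c_mon(H) = sup({μ_eq(a) : a ∈ H, A_a(∼_{H,eq}) ≠ ∅, |R_{a,k}| > 1 for some k ∈ L(a)}`
`              ∪ {μ_adj(a) : a ∈ H, A_a(∼_{H,mon}) ≠ ∅})`. -/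
theorem stmt8 {α : Type*} [CancelCommMonoid α]
    (hred : Reduced α) (hatomic : Atomic α) :
    cmonH α = sSup
      ({r : ℕ∞ | ∃ a : α, (AtomsAt (relMonEq α) a).Nonempty ∧
          (∃ k ∈ L a, ∃ z ∈ Zk a k, ∃ z' ∈ Zk a k, ¬ RRelEq a z z') ∧ r = mueq a} ∪
       {r : ℕ∞ | ∃ a : α, (AtomsAt (relMonMon α) a).Nonempty ∧ r = muadj a}) := by
  set U : Set ℕ∞ :=
      ({r : ℕ∞ | ∃ a : α, (AtomsAt (relMonEq α) a).Nonempty ∧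
          (∃ k ∈ L a, ∃ z ∈ Zk a k, ∃ z' ∈ Zk a k, ¬ RRelEq a z z') ∧ r = mueq a} ∪
       {r : ℕ∞ | ∃ a : α, (AtomsAt (relMonMon α) a).Nonempty ∧ r = muadj a}) with hU
  have hS1 : ∀ a : α, (AtomsAt (relMonEq α) a).Nonempty →
      (∃ k ∈ L a, ∃ z ∈ Zk a k, ∃ z' ∈ Zk a k, ¬ RRelEq a z z') → mueq a ≤ sSup U :=
    fun a h1 h2 => le_sSup (Set.mem_union_left _ ⟨a, h1, h2, rfl⟩)
  have hS2 : ∀ a : α, (AtomsAt (relMonMon α) a).Nonempty → muadj a ≤ sSup U :=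
    fun a h1 => le_sSup (Set.mem_union_right _ ⟨a, h1, rfl⟩)
  refine le_antisymm ?_ ?_
  · -- `cmonH α ≤ sSup U`
    unfold cmonH
    refine iSup_le fun a => ?_
    unfold cmon
    refine sInf_le ?_
    intro z hz z' hz' hc
    exact mon_chain (sSup U) hS1 hS2 (Multiset.card z' - Multiset.card z) a z hz z' hz' hc le_rfl
  · refine sSup_le fun r hr => ?_
    rcases hr with ⟨a, _, _, rfl⟩ | ⟨a, _, rfl⟩
    · -- `mueq a ≤ cmonH α`
      refine le_trans ?_ (le_iSup (fun a : α => cmon a) a)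
      unfold mueq
      refine sSup_le ?_
      rintro r ⟨k, hkL, ⟨z, hzk, z', hz'k, hnr⟩, rfl⟩
      unfold cmon
      refine le_sInf fun N hN => ?_
      by_contra hlt
      push_neg at hlt
      apply hnr
      have hchain := hN z hzk.1 z' hz'k.1 (le_of_eq (hzk.2.trans hz'k.2.symm))
      have hrtg := rtg_of_chain hchain
      have hsand := rtg_sandwich (fun x y h => h.1.2) hrtg
        (le_of_eq (hz'k.2.trans hzk.2.symm))
      refine chain_of_rtg hzk.1 (ReflTransGen.mono ?_ _ _ hsand)
      rintro x y ⟨⟨⟨hdN, _⟩, hxZ, hyZ⟩, hcx, hcy⟩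
      have hdlt : d x y < Multiset.card x := by
        rw [hcx, hzk.2]
        have hcast : (d x y : ℕ∞) < (k : ℕ∞) := lt_of_le_of_lt hdN hlt
        exact_mod_cast hcast
      obtain ⟨u, hu⟩ := exists_common_of_d_lt hdlt
      exact ⟨⟨⟨u, hu⟩, by rw [hcx, hcy]⟩, hxZ, hyZ⟩
    · -- `muadj a ≤ cmonH α`
      refine le_trans ?_ (le_iSup (fun a : α => cmon a) a)
      unfold muadj
      refine sSup_le ?_
      rintro r ⟨k, hkL, ⟨l, hadj, hdS⟩, rfl⟩
      unfold cmon
      refine le_sInf fun N hN => ?_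
      obtain ⟨z, hzZ, hzc⟩ := hadj.1
      obtain ⟨z', hz'Z, hz'c⟩ := hkL
      have hlk : l < k := hadj.2.2.1
      have hchain := hN z hzZ z' hz'Z (by rw [hzc, hz'c]; exact le_of_lt hlk)
      have hrtg := rtg_of_chain hchain
      have hmono : ∀ {p q : Fac α}, Relation.ReflTransGen
          (fun x y => ((d x y : ℕ∞) ≤ N ∧ Multiset.card x ≤ Multiset.card y) ∧
            x ∈ Z a ∧ y ∈ Z a) p q → Multiset.card p ≤ Multiset.card q :=
        fun h => rtg_card_mono (fun x y h => h.1.2) h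
      have key : ∀ q : Fac α, Relation.ReflTransGen
          (fun x y => ((d x y : ℕ∞) ≤ N ∧ Multiset.card x ≤ Multiset.card y) ∧
            x ∈ Z a ∧ y ∈ Z a) z q → Multiset.card q = k →
          ∃ x y, (((d x y : ℕ∞) ≤ N ∧ Multiset.card x ≤ Multiset.card y) ∧
            x ∈ Z a ∧ y ∈ Z a) ∧ Multiset.card x = l ∧ Multiset.card y = k := by
        intro q h
        induction h with
        | refl => intro h; omega
        | @tail b c h₁ h₂ ihk =>
          intro hck
          have hbL : Multiset.card b ∈ L a := ⟨b, h₂.2.1, rfl⟩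
          have h1 : l ≤ Multiset.card b := by
            have := hmono h₁; omega
          have h2 : Multiset.card b ≤ k := by
            have := h₂.1.2; omega
          rcases hadj.2.2.2 _ hbL h1 h2 with hb | hb
          · exact ⟨b, c, h₂, hb, hck⟩
          · exact ihk hb
      obtain ⟨x, y, hxy, hxl, hyk⟩ := key z' hrtg hz'c
      have hdSle : dS (Zk a k) (Zk a l) ≤ d y x :=
        Nat.sInf_le ⟨y, ⟨hxy.2.2, hyk⟩, x, ⟨hxy.2.1, hxl⟩, rfl⟩
      have h1 : k ≤ d x y := by
        rw [d_comm, ← hdS]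
        exact hdSle
      exact le_trans (Nat.cast_le.mpr h1) hxy.1.1

end CMR
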